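/- The graph G(m,n) is vertex decomposable, where vertex decomposability of a graph is defined recursively: a graph is vertex decomposable if it is well-covered and either consists only of isolated vertices, or has a vertex x (a shedding vertex) such that both G \ x and G \ N[x] are vertex decomposable. -/

import Mathlib

/-- The graph `G(m,n)`: vertices are pairs `(i,j)` (0-indexed, corresponding to
`x_{i+1,j+1}`), and `x_{i,j} ~ x_{k,l}` iff (`i < k` and `j > l`) or (`i > k` and `j < l`). -/
def gridGraph (m n : ℕ) : SimpleGraph (Fin m × Fin n) where
  Adj u v := (u.1 < v.1 ∧ v.2 < u.2) ∨ (v.1 < u.1 ∧ u.2 < v.2)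
  symm := ⟨fun u v h => Or.symm h⟩
  loopless := ⟨fun u h => by rcases h with ⟨h, -⟩ | ⟨h, -⟩ <;> exact absurd h (lt_irrefl _)⟩

/-- `W` is an independent set of the induced subgraph of `G` on `A`. -/
def IndepOn {V : Type*} (G : SimpleGraph V) (A W : Set V) : Prop :=
  W ⊆ A ∧ ∀ u ∈ W, ∀ v ∈ W, ¬ G.Adj u v

/-- `W` is a maximal independent set of the induced subgraph of `G` on `A`. -/
def MaxIndepOn {V : Type*} (G : SimpleGraph V) (A W : Set V) : Prop :=
  IndepOn G A W ∧ ∀ W', IndepOn G A W' → W ⊆ W' → W' = W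

/-- The induced subgraph of `G` on `A` is well-covered: all its maximal independent
sets have the same cardinality. -/
def WellCoveredOn {V : Type*} (G : SimpleGraph V) (A : Set V) : Prop :=
  ∀ W W', MaxIndepOn G A W → MaxIndepOn G A W' → W.ncard = W'.ncard

/-- Vertex decomposability for the induced subgraph of `G` on the vertex subset `A`:
it is well-covered, and either it has no edges (only isolated vertices), or there is a
shedding vertex `x ∈ A` such that deleting `x` and deleting the closed neighborhood
`N[x]` both give vertex decomposable graphs. -/
inductive VertexDecomposableOn {V : Type*} (G : SimpleGraph V) : Set V → Prop
  | isolated (A : Set V) (hwc : WellCoveredOn G A)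
      (h : ∀ u ∈ A, ∀ v ∈ A, ¬ G.Adj u v) : VertexDecomposableOn G A
  | shed (A : Set V) (x : V) (hx : x ∈ A) (hwc : WellCoveredOn G A)
      (h1 : VertexDecomposableOn G (A \ {x}))
      (h2 : VertexDecomposableOn G (A \ ({x} ∪ {y | G.Adj x y}))) :
      VertexDecomposableOn G A

namespace Stmt7Aux

variable {V : Type*}

lemma adj_iff {m n : ℕ} (u v : Fin m × Fin n) :
    (gridGraph m n).Adj u v ↔
      (((u.1 : ℕ) < v.1 ∧ (v.2 : ℕ) < u.2) ∨ ((v.1 : ℕ) < u.1 ∧ (u.2 : ℕ) < v.2)) :=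
  Iff.rfl

lemma wc_of_edgeless (G : SimpleGraph V) (A : Set V)
    (h : ∀ u ∈ A, ∀ v ∈ A, ¬ G.Adj u v) : WellCoveredOn G A := by
  intro W W' hW hW'
  have e1 : A = W := hW.2 A ⟨Set.Subset.rfl, h⟩ hW.1.1
  have e2 : A = W' := hW'.2 A ⟨Set.Subset.rfl, h⟩ hW'.1.1
  rw [← e1, ← e2]

lemma vd_of_edgeless (G : SimpleGraph V) (A : Set V)
    (h : ∀ u ∈ A, ∀ v ∈ A, ¬ G.Adj u v) : VertexDecomposableOn G A :=
  .isolated A (wc_of_edgeless G A h) h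

lemma wc_union [Finite V] (G : SimpleGraph V) (A B : Set V)
    (hd : ∀ v ∈ B, v ∉ A)
    (hB : ∀ u ∈ B, ∀ v ∈ A ∪ B, ¬ G.Adj u v)
    (hA : WellCoveredOn G A) : WellCoveredOn G (A ∪ B) := by
  have key : ∀ W, MaxIndepOn G (A ∪ B) W →
      MaxIndepOn G A (W ∩ A) ∧ W.ncard = (W ∩ A).ncard + B.ncard := by
    intro W hW
    obtain ⟨⟨hWsub, hWind⟩, hWmax⟩ := hW
    have hBW : B ⊆ W := by
      have hind : IndepOn G (A ∪ B) (W ∪ B) := by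
        refine ⟨Set.union_subset hWsub Set.subset_union_right, ?_⟩
        intro u hu v hv hadj
        rcases hu with hu | hu
        · rcases hv with hv | hv
          · exact hWind u hu v hv hadj
          · exact hB v hv u (hWsub hu) hadj.symm
        · exact hB u hu v (Set.union_subset hWsub Set.subset_union_right hv) hadj
      have h := hWmax (W ∪ B) hind Set.subset_union_left
      rw [← h]
      exact Set.subset_union_right
    have hWeq : W = (W ∩ A) ∪ B := by
      apply Set.Subset.antisymm
      · intro v hv
        rcases hWsub hv with h | h
        · exact Or.inl ⟨hv, h⟩
        · exact Or.inr h
      · exact Set.union_subset Set.inter_subset_left hBW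
    constructor
    · refine ⟨⟨Set.inter_subset_right, fun u hu v hv => hWind u hu.1 v hv.1⟩, ?_⟩
      intro W'' hW'' hsub
      have hind : IndepOn G (A ∪ B) (W'' ∪ B) := by
        refine ⟨Set.union_subset (hW''.1.trans Set.subset_union_left)
          Set.subset_union_right, ?_⟩
        intro u hu v hv hadj
        rcases hu with hu | hu
        · rcases hv with hv | hv
          · exact hW''.2 u hu v hv hadj
          · exact hB v hv u (Or.inl (hW''.1 hu)) hadj.symm
        · refine hB u hu v ?_ hadj
          rcases hv with hv | hv
          · exact Or.inl (hW''.1 hv)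
          · exact Or.inr hv
      have heq : W'' ∪ B = W := by
        apply hWmax _ hind
        intro v hv
        have hv' : v ∈ (W ∩ A) ∪ B := hWeq ▸ hv
        rcases hv' with h | h
        · exact Or.inl (hsub h)
        · exact Or.inr h
      have hsubW : W'' ⊆ W := heq ▸ Set.subset_union_left
      apply Set.Subset.antisymm
      · intro v hv
        exact ⟨hsubW hv, hW''.1 hv⟩
      · intro v hv
        have hv' : v ∈ W'' ∪ B := heq.symm ▸ hv.1
        rcases hv' with h | h
        · exact h
        · exact absurd hv.2 (hd v h)
    · have hdis : Disjoint (W ∩ A) B := Set.disjoint_left.mpr (fun v hv hvB => hd v hvB hv.2)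
      calc W.ncard = ((W ∩ A) ∪ B).ncard := by rw [← hWeq]
        _ = (W ∩ A).ncard + B.ncard := Set.ncard_union_eq hdis (Set.toFinite _) (Set.toFinite _)
  intro W W' hW hW'
  rw [(key W hW).2, (key W' hW').2, hA _ _ (key W hW).1 (key W' hW').1]

lemma vd_union [Finite V] {G : SimpleGraph V} {A : Set V}
    (hA : VertexDecomposableOn G A) :
    ∀ B : Set V, (∀ v ∈ B, v ∉ A) → (∀ u ∈ B, ∀ v ∈ A ∪ B, ¬ G.Adj u v) →
      VertexDecomposableOn G (A ∪ B) := by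
  induction hA with
  | isolated A hwc h =>
    intro B hd hB
    refine .isolated _ (wc_union G A B hd hB hwc) ?_
    intro u hu v hv hadj
    rcases hu with hu | hu
    · rcases hv with hv | hv
      · exact h u hu v hv hadj
      · exact hB v hv u (Or.inl hu) hadj.symm
    · exact hB u hu v hv hadj
  | shed A x hx hwc h1 h2 ih1 ih2 =>
    intro B hd hB
    have hxB : x ∉ B := fun h => hd x h hx
    refine .shed _ x (Or.inl hx) (wc_union G A B hd hB hwc) ?_ ?_
    · have heq : (A ∪ B) \ {x} = (A \ {x}) ∪ B := by
        ext v
        simp only [Set.mem_diff, Set.mem_union, Set.mem_singleton_iff]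
        constructor
        · rintro ⟨h | h, hne⟩
          · exact Or.inl ⟨h, hne⟩
          · exact Or.inr h
        · rintro (⟨h, hne⟩ | h)
          · exact ⟨Or.inl h, hne⟩
          · exact ⟨Or.inr h, fun he => hxB (he ▸ h)⟩
      rw [heq]
      refine ih1 B (fun v hv hv2 => hd v hv hv2.1) ?_
      intro u hu v hv
      apply hB u hu
      rcases hv with hv | hv
      · exact Or.inl hv.1
      · exact Or.inr hv
    · have hxN : ∀ v ∈ B, v ∉ ({x} ∪ {y | G.Adj x y} : Set V) := by
        intro v hv hmem
        rcases hmem with h | h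
        · exact hxB (Set.eq_of_mem_singleton h ▸ hv)
        · exact hB v hv x (Or.inl hx) (G.adj_symm h)
      have heq : (A ∪ B) \ ({x} ∪ {y | G.Adj x y}) = (A \ ({x} ∪ {y | G.Adj x y})) ∪ B := by
        ext v
        simp only [Set.mem_diff, Set.mem_union]
        constructor
        · rintro ⟨h | h, hne⟩
          · exact Or.inl ⟨h, hne⟩
          · exact Or.inr h
        · rintro (⟨h, hne⟩ | h)
          · exact ⟨Or.inl h, hne⟩
          · exact ⟨Or.inr h, hxN v h⟩
      rw [heq]
      refine ih2 B (fun v hv hv2 => hd v hv hv2.1) ?_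
      intro u hu v hv
      apply hB u hu
      rcases hv with hv | hv
      · exact Or.inl hv.1
      · exact Or.inr hv

/-- The staircase region: all rows below `r` (restricted to columns `< w`), plus
columns `[a, c)` of row `r`. -/
def C (m n r a c w : ℕ) : Set (Fin m × Fin n) :=
  {v | (v.2 : ℕ) < w ∧ ((v.1 : ℕ) < r ∨ ((v.1 : ℕ) = r ∧ a ≤ (v.2 : ℕ) ∧ (v.2 : ℕ) < c))}

end Stmt7Aux

namespace Stmt7Aux

lemma wc_C (m n r a c w : ℕ) (hr1 : 1 ≤ r) (hrm : r < m) (hac : a < c) (hcw : c ≤ w)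
    (hw1 : w ≤ c + 1) (hwn : w ≤ n) :
    WellCoveredOn (gridGraph m n) (C m n r a c w) := by
  have key : ∀ W, MaxIndepOn (gridGraph m n) (C m n r a c w) W → W.ncard = r + c := by
    intro W hW
    obtain ⟨⟨hWsub, hWind⟩, hWmax⟩ := hW
    have hmem : ∀ u ∈ W, (u.2 : ℕ) < w ∧
        ((u.1 : ℕ) < r ∨ ((u.1 : ℕ) = r ∧ a ≤ (u.2 : ℕ) ∧ (u.2 : ℕ) < c)) :=
      fun u hu => hWsub hu
    have hcomp : ∀ u ∈ W, ∀ v ∈ W,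
        (((u.1 : ℕ) ≤ v.1 ∧ (u.2 : ℕ) ≤ v.2) ∨ ((v.1 : ℕ) ≤ u.1 ∧ (v.2 : ℕ) ≤ u.2)) := by
      intro u hu v hv
      have h := hWind u hu v hv
      rw [adj_iff] at h
      omega
    have himg : (fun v : Fin m × Fin n => (v.1 : ℕ) + (v.2 : ℕ)) '' W = Set.Iio (r + c) := by
      apply Set.Subset.antisymm
      · rintro k ⟨u, hu, rfl⟩
        have := hmem u hu
        simp only [Set.mem_Iio]
        omega
      · intro k hk
        simp only [Set.mem_Iio] at hk
        by_cases hex : ∃ u ∈ W, (u.1 : ℕ) + (u.2 : ℕ) = k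
        · obtain ⟨u, hu, hku⟩ := hex
          exact ⟨u, hu, hku⟩
        · push_neg at hex
          obtain ⟨p1, p2, hpr, hpw, hpk, hprow, hpor, hpdom⟩ :
              ∃ p1 p2 : ℕ, p1 ≤ r ∧ p2 + 1 ≤ w ∧ p1 + p2 ≤ k ∧ (p1 = r → a ≤ p2) ∧
                ((p1 = 0 ∧ p2 = 0) ∨ ∃ u ∈ W, (u.1 : ℕ) = p1 ∧ (u.2 : ℕ) = p2) ∧
                (∀ u ∈ W, (u.1 : ℕ) + (u.2 : ℕ) < k → (u.1 : ℕ) ≤ p1 ∧ (u.2 : ℕ) ≤ p2) := by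
            by_cases hL : ({u | u ∈ W ∧ (u.1 : ℕ) + (u.2 : ℕ) < k}).Nonempty
            · obtain ⟨p, hpL, hpmax⟩ := Set.exists_max_image _
                (fun u : Fin m × Fin n => (u.1 : ℕ) + (u.2 : ℕ)) (Set.toFinite _) hL
              have hpC := hmem p hpL.1
              have hplt : (p.1 : ℕ) + (p.2 : ℕ) < k := hpL.2
              refine ⟨p.1, p.2, by omega, by omega, by omega, by omega,
                Or.inr ⟨p, hpL.1, rfl, rfl⟩, ?_⟩
              intro u hu hlt
              have h1 := hcomp u hu p hpL.1
              have h2 := hpmax u ⟨hu, hlt⟩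
              omega
            · have hL' : ∀ u ∈ W, ¬ ((u.1 : ℕ) + (u.2 : ℕ) < k) := by
                intro u hu hlt
                exact hL ⟨u, hu, hlt⟩
              exact ⟨0, 0, by omega, by omega, by omega, by omega, Or.inl ⟨rfl, rfl⟩,
                fun u hu hlt => absurd hlt (hL' u hu)⟩
          obtain ⟨q1, q2, hqr, hqw, hqk, hqrow, hpq1, hpq2, hqdom⟩ :
              ∃ q1 q2 : ℕ, q1 ≤ r ∧ q2 + 1 ≤ w ∧ k ≤ q1 + q2 ∧ (q1 = r → a ≤ q2) ∧
                p1 ≤ q1 ∧ p2 ≤ q2 ∧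
                (∀ u ∈ W, k < (u.1 : ℕ) + (u.2 : ℕ) → q1 ≤ (u.1 : ℕ) ∧ q2 ≤ (u.2 : ℕ)) := by
            by_cases hU : ({u | u ∈ W ∧ k < (u.1 : ℕ) + (u.2 : ℕ)}).Nonempty
            · obtain ⟨q, hqU, hqmin⟩ := Set.exists_min_image _
                (fun u : Fin m × Fin n => (u.1 : ℕ) + (u.2 : ℕ)) (Set.toFinite _) hU
              have hqC := hmem q hqU.1
              have hqlt : k < (q.1 : ℕ) + (q.2 : ℕ) := hqU.2
              have hpq : p1 ≤ (q.1 : ℕ) ∧ p2 ≤ (q.2 : ℕ) := by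
                rcases hpor with ⟨h1, h2⟩ | ⟨u, hu, hu1, hu2⟩
                · omega
                · have h3 := hcomp u hu q hqU.1
                  have h4 := hex u hu
                  omega
              refine ⟨q.1, q.2, by omega, by omega, by omega, by omega, hpq.1, hpq.2, ?_⟩
              intro u hu hlt
              have h1 := hcomp u hu q hqU.1
              have h2 := hqmin u ⟨hu, hlt⟩
              omega
            · have hU' : ∀ u ∈ W, ¬ (k < (u.1 : ℕ) + (u.2 : ℕ)) := by
                intro u hu hlt
                exact hU ⟨u, hu, hlt⟩
              exact ⟨r, w - 1, by omega, by omega, by omega, by omega, by omega, by omega,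
                fun u hu hlt => absurd hlt (hU' u hu)⟩
          obtain ⟨z1, z2, hzk, hpz1, hpz2, hzq1, hzq2, hzw, hzmem⟩ :
              ∃ z1 z2 : ℕ, z1 + z2 = k ∧ p1 ≤ z1 ∧ p2 ≤ z2 ∧ z1 ≤ q1 ∧ z2 ≤ q2 ∧
                z2 < w ∧ (z1 < r ∨ (z1 = r ∧ a ≤ z2 ∧ z2 < c)) := by
            clear hpor
            obtain ⟨v1, hv1a, hv1b, hv1c⟩ :
                ∃ v1, p1 ≤ v1 ∧ k - q2 ≤ v1 ∧ (v1 = p1 ∨ v1 = k - q2) := by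
              rcases Nat.le_total p1 (k - q2) with h | h
              · exact ⟨k - q2, h, le_refl _, Or.inr rfl⟩
              · exact ⟨p1, le_refl _, h, Or.inl rfl⟩
            by_cases hfix : v1 = r ∧ k - v1 < a
            · exact ⟨r - 1, (k - r) + 1, by omega, by omega, by omega, by omega, by omega,
                by omega, by omega⟩
            · exact ⟨v1, k - v1, by omega, by omega, by omega,
                by omega, by omega, by omega, by omega⟩
          have hz1m : z1 < m := by omega
          have hz2n : z2 < n := by omega
          refine ⟨((⟨z1, hz1m⟩ : Fin m), (⟨z2, hz2n⟩ : Fin n)), ?_, hzk⟩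
          set z : Fin m × Fin n := ((⟨z1, hz1m⟩ : Fin m), (⟨z2, hz2n⟩ : Fin n)) with hzdef
          have hzC : z ∈ C m n r a c w := by
            show z2 < w ∧ (z1 < r ∨ (z1 = r ∧ a ≤ z2 ∧ z2 < c))
            omega
          have hz1 : (z.1 : ℕ) = z1 := rfl
          have hz2 : (z.2 : ℕ) = z2 := rfl
          have hins : IndepOn (gridGraph m n) (C m n r a c w) (insert z W) := by
            refine ⟨Set.insert_subset hzC hWsub, ?_⟩
            intro u hu v hv hadj
            rw [adj_iff] at hadj
            rcases Set.mem_insert_iff.1 hu with rfl | hu <;>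
              rcases Set.mem_insert_iff.1 hv with rfl | hv
            · omega
            · have h1 := hpdom v hv
              have h2 := hqdom v hv
              have h3 := hex v hv
              omega
            · have h1 := hpdom u hu
              have h2 := hqdom u hu
              have h3 := hex u hu
              omega
            · exact hWind u hu v hv (by rw [adj_iff]; exact hadj)
          have hzW : insert z W = W := hWmax (insert z W) hins (Set.subset_insert _ _)
          rw [← hzW]
          exact Set.mem_insert _ _
    have hinj : Set.InjOn (fun v : Fin m × Fin n => (v.1 : ℕ) + (v.2 : ℕ)) W := by
      intro u hu v hv huv
      have h1 := hcomp u hu v hv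
      simp only at huv
      have h2 : (u.1 : ℕ) = v.1 ∧ (u.2 : ℕ) = v.2 := by omega
      exact Prod.ext_iff.2 ⟨Fin.ext h2.1, Fin.ext h2.2⟩
    have hIio : (Set.Iio (r + c)).ncard = r + c := by
      have h : Set.Iio (r + c) = ↑(Finset.range (r + c)) := by ext; simp
      rw [h, Set.ncard_coe_finset, Finset.card_range]
    rw [← Set.ncard_image_of_injOn hinj, himg, hIio]
  intro W W' hW hW'
  rw [key W hW, key W' hW']

end Stmt7Aux

namespace Stmt7Aux

lemma main (m n : ℕ) (r : ℕ) : ∀ d a c w, c - a ≤ d → r ≤ m → w ≤ n → c ≤ w → w ≤ c + 1 →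
    VertexDecomposableOn (gridGraph m n) (C m n r a c w) := by
  induction r using Nat.strong_induction_on with
  | _ r ihr =>
    intro d
    induction d using Nat.strong_induction_on with
    | _ d ihd =>
      intro a c w hd hrm hwn hcw hwc1
      rcases Nat.eq_zero_or_pos r with rfl | hr1
      · -- base case: a single partial row, edgeless
        apply vd_of_edgeless
        intro u hu v hv hadj
        rw [adj_iff] at hadj
        have h1 : (u.2 : ℕ) < w ∧ ((u.1 : ℕ) < 0 ∨ ((u.1 : ℕ) = 0 ∧ a ≤ (u.2 : ℕ) ∧ (u.2 : ℕ) < c)) := hu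
        have h2 : (v.2 : ℕ) < w ∧ ((v.1 : ℕ) < 0 ∨ ((v.1 : ℕ) = 0 ∧ a ≤ (v.2 : ℕ) ∧ (v.2 : ℕ) < c)) := hv
        omega
      · by_cases hs : a < c ∧ r < m
        · -- shed the vertex x = (r, a)
          obtain ⟨hac, hrm'⟩ := hs
          have han : a < n := by omega
          set x : Fin m × Fin n := ((⟨r, hrm'⟩ : Fin m), (⟨a, han⟩ : Fin n)) with hxdef
          have hxeq : ∀ v : Fin m × Fin n, v = x ↔ ((v.1 : ℕ) = r ∧ (v.2 : ℕ) = a) := by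
            intro v
            rw [Prod.ext_iff, Fin.ext_iff, Fin.ext_iff]
          have hxadj : ∀ v : Fin m × Fin n, (gridGraph m n).Adj x v ↔
              ((r < (v.1 : ℕ) ∧ (v.2 : ℕ) < a) ∨ ((v.1 : ℕ) < r ∧ a < (v.2 : ℕ))) :=
            fun v => Iff.rfl
          have hxC : x ∈ C m n r a c w := by
            show a < w ∧ (r < r ∨ (r = r ∧ a ≤ a ∧ a < c))
            omega
          refine .shed _ x hxC (wc_C m n r a c w hr1 hrm' hac hcw hwc1 hwn) ?_ ?_
          · have heq1 : C m n r a c w \ {x} = C m n r (a + 1) c w := by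
              ext v
              simp only [C, Set.mem_diff, Set.mem_singleton_iff, Set.mem_setOf_eq, hxeq]
              omega
            rw [heq1]
            exact ihd (d - 1) (by omega) (a + 1) c w (by omega) hrm hwn hcw hwc1
          · have heq2 : C m n r a c w \ ({x} ∪ {y | (gridGraph m n).Adj x y}) =
                C m n (r - 1) 0 (a + 1) (a + 1) ∪
                  {v : Fin m × Fin n | (v.1 : ℕ) = r ∧ a < (v.2 : ℕ) ∧ (v.2 : ℕ) < c} := by
              ext v
              simp only [C, Set.mem_diff, Set.mem_union, Set.mem_singleton_iff,
                Set.mem_setOf_eq, hxeq, hxadj]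
              omega
            rw [heq2]
            refine vd_union (ihr (r - 1) (by omega) (a + 1) 0 (a + 1) (a + 1)
              (by omega) (by omega) (by omega) (by omega) (by omega)) _ ?_ ?_
            · intro v hv hvC
              have h1 : (v.1 : ℕ) = r ∧ a < (v.2 : ℕ) ∧ (v.2 : ℕ) < c := hv
              have h2 : (v.2 : ℕ) < a + 1 ∧ ((v.1 : ℕ) < r - 1 ∨
                  ((v.1 : ℕ) = r - 1 ∧ 0 ≤ (v.2 : ℕ) ∧ (v.2 : ℕ) < a + 1)) := hvC
              omega
            · intro u hu v hv hadj
              rw [adj_iff] at hadj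
              have h1 : (u.1 : ℕ) = r ∧ a < (u.2 : ℕ) ∧ (u.2 : ℕ) < c := hu
              rcases hv with hv | hv
              · have h2 : (v.2 : ℕ) < a + 1 ∧ ((v.1 : ℕ) < r - 1 ∨
                    ((v.1 : ℕ) = r - 1 ∧ 0 ≤ (v.2 : ℕ) ∧ (v.2 : ℕ) < a + 1)) := hv
                omega
              · have h2 : (v.1 : ℕ) = r ∧ a < (v.2 : ℕ) ∧ (v.2 : ℕ) < c := hv
                omega
        · -- rewrite case: the partial row is empty or out of range
          have heq : C m n r a c w = C m n (r - 1) 0 w w := by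
            ext v
            simp only [C, Set.mem_setOf_eq]
            have hv1 := v.1.isLt
            push_neg at hs
            omega
          rw [heq]
          exact ihr (r - 1) (by omega) w 0 w w (le_refl _) (by omega) hwn (le_refl _) (by omega)

end Stmt7Aux

/-- the graph `G(m,n)` is vertex decomposable. -/
theorem stmt7 (m n : ℕ) :
    VertexDecomposableOn (gridGraph m n) Set.univ := by
  rcases Nat.eq_zero_or_pos m with rfl | hm
  · apply Stmt7Aux.vd_of_edgeless
    intro u hu
    exact u.1.elim0
  · have heq : (Set.univ : Set (Fin m × Fin n)) = Stmt7Aux.C m n (m - 1) 0 n n := by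
      ext v
      simp only [Stmt7Aux.C, Set.mem_univ, Set.mem_setOf_eq, true_iff]
      have h1 := v.1.isLt
      have h2 := v.2.isLt
      omega
    rw [heq]
    exact Stmt7Aux.main m n (m - 1) n 0 n n (by omega) (by omega) le_rfl le_rfl (by omega)
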